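/- For all a, b, c, d > 0 and all x, y ≥ 0 with c·x² + d·y² = 1, we have x^a · y^b ≤ (a/c)^{a/2} · (b/d)^{b/2} / (a+b)^{(a+b)/2}. -/

import Mathlib

open Real

theorem stmt_1 (a b c d : ℝ) (ha : 0 < a) (hb : 0 < b) (hc : 0 < c) (hd : 0 < d)
    (x y : ℝ) (hx : 0 ≤ x) (hy : 0 ≤ y) (hcon : c * x ^ 2 + d * y ^ 2 = 1) :
    x ^ a * y ^ b ≤ (a / c) ^ (a / 2) * (b / d) ^ (b / 2) / (a + b) ^ ((a + b) / 2) := by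
  have hs : 0 < a + b := by linarith
  set p₁ := (a + b) / a * (c * x ^ 2) with hp₁
  set p₂ := (a + b) / b * (d * y ^ 2) with hp₂
  have hp₁0 : 0 ≤ p₁ := by positivity
  have hp₂0 : 0 ≤ p₂ := by positivity
  have hw : a / (a + b) + b / (a + b) = 1 := by field_simp
  have key : p₁ ^ (a / (a + b)) * p₂ ^ (b / (a + b)) ≤ 1 := by
    have h := Real.geom_mean_le_arith_mean2_weighted (by positivity) (by positivity)
      hp₁0 hp₂0 hw
    calc p₁ ^ (a / (a + b)) * p₂ ^ (b / (a + b))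
        ≤ a / (a + b) * p₁ + b / (a + b) * p₂ := h
      _ = c * x ^ 2 + d * y ^ 2 := by
          rw [hp₁, hp₂]; field_simp
      _ = 1 := hcon
  have key2 : (p₁ ^ (a / (a + b)) * p₂ ^ (b / (a + b))) ^ ((a + b) / 2) ≤ 1 :=
    Real.rpow_le_one (by positivity) key (by positivity)
  have expand : (p₁ ^ (a / (a + b)) * p₂ ^ (b / (a + b))) ^ ((a + b) / 2)
      = ((a + b) / a * c) ^ (a / 2) * x ^ a * (((a + b) / b * d) ^ (b / 2) * y ^ b) := by
    rw [Real.mul_rpow (by positivity) (by positivity),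
        ← Real.rpow_mul hp₁0, ← Real.rpow_mul hp₂0]
    have e1 : a / (a + b) * ((a + b) / 2) = a / 2 := by field_simp
    have e2 : b / (a + b) * ((a + b) / 2) = b / 2 := by field_simp
    have hx2 : x ^ 2 = x ^ (2 : ℝ) := by
      rw [← Real.rpow_natCast x 2]; norm_num
    have hy2 : y ^ 2 = y ^ (2 : ℝ) := by
      rw [← Real.rpow_natCast y 2]; norm_num
    have f1 : p₁ ^ (a / 2) = ((a + b) / a * c) ^ (a / 2) * x ^ a := by
      rw [hp₁, show (a + b) / a * (c * x ^ 2) = (a + b) / a * c * (x ^ 2) by ring,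
        Real.mul_rpow (by positivity) (by positivity), hx2, ← Real.rpow_mul hx,
        show (2 : ℝ) * (a / 2) = a by ring]
    have f2 : p₂ ^ (b / 2) = ((a + b) / b * d) ^ (b / 2) * y ^ b := by
      rw [hp₂, show (a + b) / b * (d * y ^ 2) = (a + b) / b * d * (y ^ 2) by ring,
        Real.mul_rpow (by positivity) (by positivity), hy2, ← Real.rpow_mul hy,
        show (2 : ℝ) * (b / 2) = b by ring]
    rw [e1, e2, f1, f2]
  rw [expand] at key2
  set C₁ := ((a + b) / a * c) ^ (a / 2) with hC₁def
  set C₂ := ((a + b) / b * d) ^ (b / 2) with hC₂def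
  have hC₁ : 0 < C₁ := by rw [hC₁def]; positivity
  have hC₂ : 0 < C₂ := by rw [hC₂def]; positivity
  have hRHS : (a / c) ^ (a / 2) * (b / d) ^ (b / 2) / (a + b) ^ ((a + b) / 2)
      = 1 / (C₁ * C₂) := by
    rw [eq_div_iff (by positivity)]
    have h1 : (a / c) ^ (a / 2) * C₁ = (a + b) ^ (a / 2) := by
      rw [hC₁def, ← Real.mul_rpow (by positivity) (by positivity)]
      congr 1
      field_simp
    have h2 : (b / d) ^ (b / 2) * C₂ = (a + b) ^ (b / 2) := by
      rw [hC₂def, ← Real.mul_rpow (by positivity) (by positivity)]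
      congr 1
      field_simp
    calc (a / c) ^ (a / 2) * (b / d) ^ (b / 2) / (a + b) ^ ((a + b) / 2) * (C₁ * C₂)
        = ((a / c) ^ (a / 2) * C₁) * ((b / d) ^ (b / 2) * C₂) / (a + b) ^ ((a + b) / 2) := by
          ring
      _ = (a + b) ^ (a / 2) * (a + b) ^ (b / 2) / (a + b) ^ ((a + b) / 2) := by rw [h1, h2]
      _ = 1 := by
          rw [← Real.rpow_add hs]
          have : a / 2 + b / 2 = (a + b) / 2 := by ring
          rw [this, div_self (by positivity)]
  rw [hRHS, le_div_iff₀ (by positivity)]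
  have : x ^ a * y ^ b * (C₁ * C₂) = C₁ * x ^ a * (C₂ * y ^ b) := by ring
  linarith [key2]
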